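/- Under the stated setting together with Assumption (Sym), the duality mapping D is a cusco map on the unit sphere S := {b ∈ X : ‖b‖_{X_Q} = 1}: for every b ∈ S the set D(b) is nonempty, convex and compact in the norm topology of (X*, ‖·‖_{X_Q*}), and D is norm-to-norm upper semicontinuous: for every b ∈ S and every norm-open set V ⊆ X* with D(b) ⊆ V there exists δ > 0 such that D(b') ⊆ V whenever b' ∈ S and ‖b' − b‖_{X_Q} < δ. -/

import Mathlib

open NormedSpace Filter Topology

noncomputable section

/-- The setting of Coifman–Lions–Meyer–Semmes-type quadratic operators:
`X` is a real Banach space, `H` a Hilbert space over `𝕜 ∈ {ℝ, ℂ}`,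
`T` is a bilinear map `X** × H → H` satisfying assumption (A1)
(two-sided norm bounds and compactness of `T_b` for `b` in the canonical
image of `X`) and assumption (A2) (`T_b` self-adjoint with norm equal to the
supremum of `⟨T_b f, f⟩` over the unit sphere), together with the quadratic
map `Q : H → X*` determined by `⟨a, Qω⟩ = ⟨T_a ω, ω⟩` for `a ∈ X`, and its
Gâteaux derivative `Q'` determined by `⟨a, Q'_ω γ⟩ = 2 Re ⟨T_a ω, γ⟩`. -/
structure CLMS (𝕜 X H : Type*) [RCLike 𝕜]
    [NormedAddCommGroup X] [NormedSpace ℝ X] [CompleteSpace X]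
    [NormedAddCommGroup H] [InnerProductSpace 𝕜 H] [CompleteSpace H] where
  T : StrongDual ℝ (StrongDual ℝ X) → (H →L[𝕜] H)
  T_add : ∀ (b₁ b₂ : StrongDual ℝ (StrongDual ℝ X)) (ω : H), T (b₁ + b₂) ω = T b₁ ω + T b₂ ω
  T_smul : ∀ (r : ℝ) (b : StrongDual ℝ (StrongDual ℝ X)) (ω : H), T (r • b) ω = (r : 𝕜) • T b ω
  c : ℝ
  C : ℝ
  c_pos : 0 < c
  c_le_C : c ≤ C
  lower : ∀ b : StrongDual ℝ (StrongDual ℝ X), c * ‖b‖ ≤ ‖T b‖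
  upper : ∀ b : StrongDual ℝ (StrongDual ℝ X), ‖T b‖ ≤ C * ‖b‖
  compact : ∀ a : X, IsCompactOperator (T (inclusionInDoubleDual ℝ X a))
  selfAdj : ∀ b : StrongDual ℝ (StrongDual ℝ X), IsSelfAdjoint (T b)
  norm_eq : ∀ b : StrongDual ℝ (StrongDual ℝ X),
    ‖T b‖ = sSup {r : ℝ | ∃ f : H, ‖f‖ = 1 ∧ RCLike.re (inner 𝕜 ((T b) f) f : 𝕜) = r}
  Q : H → StrongDual ℝ X
  hQ : ∀ (a : X) (ω : H),
    Q ω a = RCLike.re (inner 𝕜 ((T (inclusionInDoubleDual ℝ X a)) ω) ω : 𝕜)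
  Q' : H → H → StrongDual ℝ X
  hQ' : ∀ (a : X) (ω γ : H),
    Q' ω γ a = 2 * RCLike.re (inner 𝕜 ((T (inclusionInDoubleDual ℝ X a)) ω) γ : 𝕜)

namespace CLMS

variable {𝕜 X H : Type*} [RCLike 𝕜]
    [NormedAddCommGroup X] [NormedSpace ℝ X] [CompleteSpace X]
    [NormedAddCommGroup H] [InnerProductSpace 𝕜 H] [CompleteSpace H]

/-- The equivalent norm `‖b‖_{X_Q} := ‖T_b‖` on `X`. -/
def normQ (S : CLMS 𝕜 X H) (b : X) : ℝ := ‖S.T (inclusionInDoubleDual ℝ X b)‖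

/-- The dual norm `‖f‖_{X_Q*} := sup {⟨b, f⟩ : b ∈ X, ‖b‖_{X_Q} ≤ 1}` on `X*`. -/
def dualNormQ (S : CLMS 𝕜 X H) (f : StrongDual ℝ X) : ℝ :=
  sSup {r : ℝ | ∃ b : X, S.normQ b ≤ 1 ∧ f b = r}

/-- The set `𝒜 = {ω ∈ H : ‖ω‖ = 1, ‖Qω‖_{X_Q*} = 1}`. -/
def A (S : CLMS 𝕜 X H) : Set H := {ω : H | ‖ω‖ = 1 ∧ S.dualNormQ (S.Q ω) = 1}

/-- The duality mapping `D(b) = {h ∈ X* : ‖h‖_{X_Q*} = 1, ⟨b, h⟩ = 1}`. -/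
def D (S : CLMS 𝕜 X H) (b : X) : Set (StrongDual ℝ X) :=
  {h : StrongDual ℝ X | S.dualNormQ h = 1 ∧ h b = 1}

/-- `ω` is a minimum norm solution (of `Qγ = Qω`). -/
def MinNormSol (S : CLMS 𝕜 X H) (ω : H) : Prop :=
  ∀ γ : H, S.Q γ = S.Q ω → ‖ω‖ ≤ ‖γ‖

/-- Assumption (Sym): if `ω, γ ∈ 𝒜` have `Qω = Qγ`, then `Q'_ω (c γ) ≠ 0`
for some unimodular `c ∈ 𝕜`. -/
def Sym (S : CLMS 𝕜 X H) : Prop :=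
  ∀ ω ∈ S.A, ∀ γ ∈ S.A, S.Q ω = S.Q γ → ∃ c : 𝕜, ‖c‖ = 1 ∧ S.Q' ω (c • γ) ≠ 0

/-- Assumption (A3): the canonical pairing of `b ∈ X**` with `Qω ∈ X*`
equals `⟨T_b ω, ω⟩`. -/
def A3 (S : CLMS 𝕜 X H) : Prop :=
  ∀ (b : StrongDual ℝ (StrongDual ℝ X)) (ω : H), b (S.Q ω) = RCLike.re (inner 𝕜 ((S.T b) ω) ω : 𝕜)

end CLMS

namespace CLMS

variable {𝕜 X H : Type*} [RCLike 𝕜]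
    [NormedAddCommGroup X] [NormedSpace ℝ X] [CompleteSpace X]
    [NormedAddCommGroup H] [InnerProductSpace 𝕜 H] [CompleteSpace H]
    (S : CLMS 𝕜 X H)

/-- `T` composed with the canonical inclusion. -/
def TX (a : X) : H →L[𝕜] H := S.T (inclusionInDoubleDual ℝ X a)

lemma T_zero : S.T 0 = 0 := by
  ext ω
  have h := S.T_add 0 0 ω
  rw [add_zero] at h
  have := add_eq_right.mp h.symm
  simpa using this

lemma TX_add_apply (a a' : X) (ω : H) : S.TX (a + a') ω = S.TX a ω + S.TX a' ω := by
  rw [TX, TX, TX, map_add (inclusionInDoubleDual ℝ X), S.T_add]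

lemma TX_smul_apply (r : ℝ) (a : X) (ω : H) : S.TX (r • a) ω = (r : 𝕜) • S.TX a ω := by
  rw [TX, TX, map_smul, S.T_smul]

lemma TX_smul (r : ℝ) (a : X) : S.TX (r • a) = (r : 𝕜) • S.TX a := by
  ext ω; rw [TX_smul_apply]; rfl

lemma normQ_def (a : X) : S.normQ a = ‖S.TX a‖ := rfl

lemma normQ_nonneg (a : X) : 0 ≤ S.normQ a := norm_nonneg _

lemma norm_le_normQ (a : X) : S.c * ‖a‖ ≤ S.normQ a := by
  have h := S.lower (inclusionInDoubleDual ℝ X a)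
  have he : ‖(inclusionInDoubleDual ℝ X) a‖ = ‖a‖ := (inclusionInDoubleDualLi ℝ (E := X)).norm_map a
  rwa [he] at h

lemma normQ_le_norm (a : X) : S.normQ a ≤ S.C * ‖a‖ := by
  have h := S.upper (inclusionInDoubleDual ℝ X a)
  have he : ‖(inclusionInDoubleDual ℝ X) a‖ = ‖a‖ := (inclusionInDoubleDualLi ℝ (E := X)).norm_map a
  rwa [he] at h

lemma normQ_zero : S.normQ 0 = 0 := by
  rw [normQ_def]
  have : S.TX (0 : X) = 0 := by rw [TX, map_zero, S.T_zero]
  rw [this, norm_zero]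

lemma normQ_add_le (a a' : X) : S.normQ (a + a') ≤ S.normQ a + S.normQ a' := by
  rw [normQ_def, normQ_def, normQ_def]
  calc ‖S.TX (a + a')‖ = ‖S.TX a + S.TX a'‖ := by
        congr 1; ext ω; rw [TX_add_apply]; rfl
    _ ≤ _ := norm_add_le _ _

lemma normQ_smul (r : ℝ) (a : X) : S.normQ (r • a) = |r| * S.normQ a := by
  rw [normQ_def, normQ_def, TX_smul]
  have := norm_smul (α := 𝕜) (β := H →L[𝕜] H) (r:𝕜) (S.TX a)
  rw [RCLike.norm_ofReal] at this
  exact this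

lemma normQ_neg (a : X) : S.normQ (-a) = S.normQ a := by
  have h := S.normQ_smul (-1) a
  simpa using h

lemma normQ_pos {a : X} (h : a ≠ 0) : 0 < S.normQ a :=
  lt_of_lt_of_le (mul_pos S.c_pos (norm_pos_iff.2 h)) (S.norm_le_normQ a)

lemma norm_le_normQ_div (a : X) : ‖a‖ ≤ S.normQ a / S.c := by
  rw [le_div_iff₀ S.c_pos, mul_comm]
  exact S.norm_le_normQ a

/-! ### dual norm lemmas -/

lemma zero_mem_dset (f : StrongDual ℝ X) :
    (0 : ℝ) ∈ {r : ℝ | ∃ b : X, S.normQ b ≤ 1 ∧ f b = r} :=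
  ⟨0, by rw [S.normQ_zero]; norm_num, map_zero f⟩

lemma bddAbove_dset (f : StrongDual ℝ X) :
    BddAbove {r : ℝ | ∃ b : X, S.normQ b ≤ 1 ∧ f b = r} := by
  refine ⟨‖f‖ * (1 / S.c), ?_⟩
  rintro r ⟨b, hb, rfl⟩
  have h1 : f b ≤ ‖f‖ * ‖b‖ := (le_abs_self _).trans (f.le_opNorm b)
  have h2 : ‖b‖ ≤ 1 / S.c := by
    have h3 := S.norm_le_normQ b
    rw [le_div_iff₀ S.c_pos, mul_comm]
    linarith
  calc f b ≤ ‖f‖ * ‖b‖ := h1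
    _ ≤ ‖f‖ * (1 / S.c) := by
        exact mul_le_mul_of_nonneg_left h2 (norm_nonneg f)


lemma le_dualNormQ {f : StrongDual ℝ X} {b : X} (hb : S.normQ b ≤ 1) : f b ≤ S.dualNormQ f :=
  le_csSup (S.bddAbove_dset f) ⟨b, hb, rfl⟩

lemma dualNormQ_nonneg (f : StrongDual ℝ X) : 0 ≤ S.dualNormQ f :=
  le_csSup (S.bddAbove_dset f) (S.zero_mem_dset f)

lemma dualNormQ_le {f : StrongDual ℝ X} {r : ℝ} (h : ∀ b : X, S.normQ b ≤ 1 → f b ≤ r) :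
    S.dualNormQ f ≤ r := by
  apply csSup_le ⟨0, S.zero_mem_dset f⟩
  rintro x ⟨b, hb, rfl⟩
  exact h b hb

lemma dualNormQ_le_norm (f : StrongDual ℝ X) : S.dualNormQ f ≤ ‖f‖ * (1 / S.c) := by
  apply S.dualNormQ_le
  intro b hb
  have h1 : f b ≤ ‖f‖ * ‖b‖ := (le_abs_self _).trans (f.le_opNorm b)
  have h2 : ‖b‖ ≤ 1 / S.c := by
    have h3 := S.norm_le_normQ b
    rw [le_div_iff₀ S.c_pos, mul_comm]
    linarith
  calc f b ≤ ‖f‖ * ‖b‖ := h1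
    _ ≤ _ := mul_le_mul_of_nonneg_left h2 (norm_nonneg f)

lemma apply_le_dualNormQ_mul (f : StrongDual ℝ X) (b : X) :
    f b ≤ S.dualNormQ f * S.normQ b := by
  rcases eq_or_ne b 0 with rfl | hb
  · rw [map_zero, S.normQ_zero, mul_zero]
  · have hpos := S.normQ_pos hb
    have h1 : S.normQ ((S.normQ b)⁻¹ • b) ≤ 1 := by
      rw [S.normQ_smul, abs_of_pos (inv_pos.2 hpos), inv_mul_cancel₀ (ne_of_gt hpos)]
    have h2 := S.le_dualNormQ (f := f) h1
    rw [map_smul] at h2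
    have h3 : (S.normQ b)⁻¹ * f b ≤ S.dualNormQ f := h2
    calc f b = S.normQ b * ((S.normQ b)⁻¹ * f b) := by field_simp
      _ ≤ S.normQ b * S.dualNormQ f := by
          exact mul_le_mul_of_nonneg_left h3 (le_of_lt hpos)
      _ = _ := mul_comm _ _

lemma dualNormQ_sub_le (f g : StrongDual ℝ X) :
    S.dualNormQ f ≤ S.dualNormQ (f - g) + S.dualNormQ g := by
  apply S.dualNormQ_le
  intro b hb
  have h1 := S.le_dualNormQ (f := f - g) hb
  have h2 := S.le_dualNormQ (f := g) hb
  have h3 : f b = (f - g) b + g b := by simp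
  linarith

lemma continuous_dualNormQ : Continuous S.dualNormQ := by
  rw [Metric.continuous_iff]
  intro f ε hε
  refine ⟨ε * S.c, mul_pos hε S.c_pos, fun g hg => ?_⟩
  have key : ∀ u v : StrongDual ℝ X, S.dualNormQ u - S.dualNormQ v ≤ ‖u - v‖ * (1 / S.c) := by
    intro u v
    have h1 := S.dualNormQ_sub_le u v
    have h2 := S.dualNormQ_le_norm (u - v)
    linarith
  have h1 := key g f
  have h2 := key f g
  have e1 : ‖g - f‖ = dist g f := (dist_eq_norm g f).symm
  have e2 : ‖f - g‖ = dist g f := by rw [← dist_eq_norm, dist_comm]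
  rw [e1] at h1; rw [e2] at h2
  rw [Real.dist_eq, abs_lt]
  have hc := S.c_pos
  have hlt : dist g f * (1 / S.c) < ε := by
    have hstep : dist g f * (1 / S.c) < (ε * S.c) * (1 / S.c) :=
      mul_lt_mul_of_pos_right hg (by positivity)
    have he : (ε * S.c) * (1 / S.c) = ε := by field_simp
    linarith
  constructor <;> nlinarith

/-! ### Q lemmas -/

lemma Q_apply (ω : H) (a : X) :
    S.Q ω a = RCLike.re (inner 𝕜 (S.TX a ω) ω : 𝕜) := S.hQ a ω

lemma abs_re_inner_le (u v : H) : |RCLike.re (inner 𝕜 u v : 𝕜)| ≤ ‖u‖ * ‖v‖ :=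
  (RCLike.abs_re_le_norm _).trans (norm_inner_le_norm u v)

lemma Q_sub_norm (ω γ : H) :
    ‖S.Q ω - S.Q γ‖ ≤ S.C * ((‖ω‖ + ‖γ‖) * ‖ω - γ‖) := by
  have hC : 0 ≤ S.C := le_trans (le_of_lt S.c_pos) S.c_le_C
  refine ContinuousLinearMap.opNorm_le_bound _ (by positivity) fun a => ?_
  have expand : S.Q ω a - S.Q γ a =
      RCLike.re (inner 𝕜 (S.TX a (ω - γ)) ω : 𝕜) + RCLike.re (inner 𝕜 (S.TX a γ) (ω - γ) : 𝕜) := by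
    rw [S.Q_apply, S.Q_apply, map_sub (S.TX a), inner_sub_left, inner_sub_right, map_sub, map_sub]
    ring
  have hTa : ‖S.TX a‖ ≤ S.C * ‖a‖ := S.normQ_le_norm a
  have hb1 : |RCLike.re (inner 𝕜 (S.TX a (ω - γ)) ω : 𝕜)| ≤ S.C * ‖a‖ * ‖ω - γ‖ * ‖ω‖ := by
    refine (abs_re_inner_le _ _).trans ?_
    have := (S.TX a).le_opNorm (ω - γ)
    have h2 : ‖S.TX a (ω - γ)‖ ≤ S.C * ‖a‖ * ‖ω - γ‖ := by
      calc ‖S.TX a (ω - γ)‖ ≤ ‖S.TX a‖ * ‖ω - γ‖ := this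
        _ ≤ S.C * ‖a‖ * ‖ω - γ‖ := mul_le_mul_of_nonneg_right hTa (norm_nonneg _)
    exact mul_le_mul_of_nonneg_right h2 (norm_nonneg ω)
  have hb2 : |RCLike.re (inner 𝕜 (S.TX a γ) (ω - γ) : 𝕜)| ≤ S.C * ‖a‖ * ‖γ‖ * ‖ω - γ‖ := by
    refine (abs_re_inner_le _ _).trans ?_
    have h2 : ‖S.TX a γ‖ ≤ S.C * ‖a‖ * ‖γ‖ := by
      calc ‖S.TX a γ‖ ≤ ‖S.TX a‖ * ‖γ‖ := (S.TX a).le_opNorm γ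
        _ ≤ S.C * ‖a‖ * ‖γ‖ := mul_le_mul_of_nonneg_right hTa (norm_nonneg _)
    exact mul_le_mul_of_nonneg_right h2 (norm_nonneg _)
  have : ‖(S.Q ω - S.Q γ) a‖ = |S.Q ω a - S.Q γ a| := by
    rw [ContinuousLinearMap.sub_apply]; exact Real.norm_eq_abs _
  rw [this, expand]
  have habs := abs_add_le (RCLike.re (inner 𝕜 (S.TX a (ω - γ)) ω : 𝕜))
    (RCLike.re (inner 𝕜 (S.TX a γ) (ω - γ) : 𝕜))
  nlinarith [norm_nonneg a, norm_nonneg (ω - γ), norm_nonneg ω, norm_nonneg γ]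

lemma tendsto_Q {ω : ℕ → H} {y : H} (h : Filter.Tendsto ω Filter.atTop (nhds y)) :
    Filter.Tendsto (fun n => S.Q (ω n)) Filter.atTop (nhds (S.Q y)) := by
  rw [tendsto_iff_dist_tendsto_zero]
  have hC : 0 ≤ S.C := le_trans (le_of_lt S.c_pos) S.c_le_C
  apply squeeze_zero (fun n => dist_nonneg)
    (g := fun n => S.C * ((‖ω n‖ + ‖y‖) * ‖ω n - y‖))
    (fun n => by rw [dist_eq_norm]; exact S.Q_sub_norm (ω n) y)
  have h1 : Filter.Tendsto (fun n => ‖ω n - y‖) Filter.atTop (nhds 0) := by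
    have := (h.sub (tendsto_const_nhds (x := y))).norm
    simpa using this
  have h2 : Filter.Tendsto (fun n => ‖ω n‖ + ‖y‖) Filter.atTop (nhds (‖y‖ + ‖y‖)) :=
    h.norm.add tendsto_const_nhds
  have h3 := (h2.mul h1).const_mul S.C
  simpa using h3

lemma dualNormQ_Q_le (ω : H) : S.dualNormQ (S.Q ω) ≤ ‖ω‖ ^ 2 := by
  apply S.dualNormQ_le
  intro a ha
  rw [S.Q_apply]
  have h1 : RCLike.re (inner 𝕜 (S.TX a ω) ω : 𝕜) ≤ ‖S.TX a ω‖ * ‖ω‖ := re_inner_le_norm _ _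
  have h2 : ‖S.TX a ω‖ ≤ ‖S.TX a‖ * ‖ω‖ := (S.TX a).le_opNorm ω
  have h3 : ‖S.TX a‖ ≤ 1 := ha
  nlinarith [norm_nonneg ω, norm_nonneg (S.TX a ω), norm_nonneg (S.TX a)]

/-! ### the fixed-point set and compactness machinery -/

def Mset (b : X) : Set H := {ω : H | ‖ω‖ = 1 ∧ S.TX b ω = ω}

lemma subseq_lemma (b : X) (ω : ℕ → H) (hω : ∀ n, ‖ω n‖ ≤ 1)
    (hc : Filter.Tendsto (fun n => ‖S.TX b (ω n) - ω n‖) Filter.atTop (nhds 0)) :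
    ∃ y : H, S.TX b y = y ∧ ∃ φ : ℕ → ℕ, StrictMono φ ∧
      Filter.Tendsto (ω ∘ φ) Filter.atTop (nhds y) := by
  obtain ⟨K, hK, hKmem⟩ := S.compact b
  obtain ⟨ε, hε, hball⟩ := Metric.mem_nhds_iff.mp hKmem
  have hne : ((ε/2 : ℝ) : 𝕜) ≠ 0 := by
    simp only [ne_eq, RCLike.ofReal_eq_zero]
    linarith
  have humem : ∀ n, ((ε/2 : ℝ) : 𝕜) • (S.TX b (ω n)) ∈ K := by
    intro n
    have h1 : ((ε/2 : ℝ) : 𝕜) • (ω n) ∈ Metric.ball (0 : H) ε := by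
      rw [Metric.mem_ball, dist_zero_right, norm_smul, RCLike.norm_ofReal]
      have h2 : |ε/2| = ε/2 := abs_of_pos (by linarith)
      rw [h2]
      nlinarith [hω n, norm_nonneg (ω n)]
    have h3 := hball h1
    rw [Set.mem_preimage, map_smul] at h3
    exact h3
  obtain ⟨z, _, φ, hφ, hconv⟩ := hK.tendsto_subseq humem
  have h2 : Filter.Tendsto (fun n => S.TX b (ω (φ n))) Filter.atTop
      (nhds ((((ε/2 : ℝ) : 𝕜))⁻¹ • z)) := by
    have h3 := hconv.const_smul ((((ε/2 : ℝ) : 𝕜))⁻¹)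
    have h4 : (fun n => (((ε/2 : ℝ) : 𝕜))⁻¹ • (((ε/2 : ℝ) : 𝕜) • (S.TX b (ω (φ n)))))
        = fun n => S.TX b (ω (φ n)) := by
      funext n
      rw [smul_smul, inv_mul_cancel₀ hne, one_smul]
    rw [Function.comp_def] at h3
    rwa [h4] at h3
  set y : H := (((ε/2 : ℝ) : 𝕜))⁻¹ • z with hy
  have h5 : Filter.Tendsto (fun n => S.TX b (ω (φ n)) - ω (φ n)) Filter.atTop (nhds 0) := by
    exact tendsto_zero_iff_norm_tendsto_zero.mpr (hc.comp hφ.tendsto_atTop)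
  have h6 : Filter.Tendsto (ω ∘ φ) Filter.atTop (nhds y) := by
    have h7 := h2.sub h5
    simp only [sub_sub_cancel, sub_zero] at h7
    exact h7
  refine ⟨y, ?_, φ, hφ, h6⟩
  have h8 : Filter.Tendsto (fun n => S.TX b (ω (φ n))) Filter.atTop (nhds (S.TX b y)) :=
    ((S.TX b).continuous.tendsto y).comp h6
  exact tendsto_nhds_unique h8 h2

lemma norm_lim_one {ω : ℕ → H} {y : H} (h1 : ∀ n, ‖ω n‖ = 1)
    (h : Filter.Tendsto ω Filter.atTop (nhds y)) : ‖y‖ = 1 := by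
  have h2 : Filter.Tendsto (fun n => ‖ω n‖) Filter.atTop (nhds ‖y‖) := h.norm
  have h3 : (fun n => ‖ω n‖) = fun _ => (1:ℝ) := funext h1
  rw [h3] at h2
  exact tendsto_nhds_unique h2 tendsto_const_nhds

lemma exists_unit_fixed (b : X) (hb : S.normQ b = 1) :
    ∃ ω : H, ‖ω‖ = 1 ∧ S.TX b ω = ω := by
  have hnorm : ‖S.TX b‖ = 1 := hb
  set Rs := {r : ℝ | ∃ f : H, ‖f‖ = 1 ∧ RCLike.re (inner 𝕜 (S.TX b f) f : 𝕜) = r} with hRs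
  have hsup0 : ‖S.TX b‖ = sSup Rs := S.norm_eq (inclusionInDoubleDual ℝ X b)
  have hsup : (1:ℝ) = sSup Rs := by rw [← hsup0, hnorm]
  have hne : Rs.Nonempty := by
    by_contra hcon
    rw [Set.not_nonempty_iff_eq_empty] at hcon
    rw [hcon, Real.sSup_empty] at hsup
    linarith
  have hseq : ∀ n : ℕ, ∃ f : H, ‖f‖ = 1 ∧
      1 - 1/((n:ℝ)+1) < RCLike.re (inner 𝕜 (S.TX b f) f : 𝕜) := by
    intro n
    have hlt : 1 - 1/((n:ℝ)+1) < sSup Rs := by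
      rw [← hsup]
      have : (0:ℝ) < 1/((n:ℝ)+1) := by positivity
      linarith
    obtain ⟨r, hrmem, hrgt⟩ := exists_lt_of_lt_csSup hne hlt
    obtain ⟨f, hf, hre⟩ := hrmem
    exact ⟨f, hf, by rw [hre]; exact hrgt⟩
  choose f hf1 hf2 using hseq
  have hbound : ∀ n, ‖S.TX b (f n) - f n‖^2 ≤ 2 * (1/((n:ℝ)+1)) := by
    intro n
    have hexp : ‖S.TX b (f n) - f n‖^2 =
        ‖S.TX b (f n)‖^2 - 2 * RCLike.re (inner 𝕜 (S.TX b (f n)) (f n) : 𝕜) + ‖f n‖^2 :=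
      norm_sub_sq (𝕜 := 𝕜) _ _
    have h1 : ‖S.TX b (f n)‖ ≤ 1 := by
      have h2 := (S.TX b).le_opNorm (f n)
      rwa [hnorm, one_mul, hf1 n] at h2
    have h2 := hf2 n
    rw [hexp, hf1 n]
    nlinarith [norm_nonneg (S.TX b (f n))]
  have hconv : Filter.Tendsto (fun n => ‖S.TX b (f n) - f n‖) Filter.atTop (nhds 0) := by
    have hle : ∀ n : ℕ, ‖S.TX b (f n) - f n‖ ≤ Real.sqrt (2 * (1/((n:ℝ)+1))) := by
      intro n
      rw [← Real.sqrt_sq (norm_nonneg (S.TX b (f n) - f n))]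
      exact Real.sqrt_le_sqrt (hbound n)
    have h1 : Filter.Tendsto (fun n : ℕ => 2 * (1/((n:ℝ)+1))) Filter.atTop (nhds 0) := by
      have h2 := tendsto_one_div_add_atTop_nhds_zero_nat.const_mul (2:ℝ)
      simpa using h2
    have h3 : Filter.Tendsto (fun n : ℕ => Real.sqrt (2 * (1/((n:ℝ)+1)))) Filter.atTop (nhds 0) := by
      have h4 := (Real.continuous_sqrt.tendsto 0).comp h1
      rw [Real.sqrt_zero] at h4
      exact h4
    exact squeeze_zero (fun n => norm_nonneg _) hle h3
  obtain ⟨y, hy, φ, hφ, hconvy⟩ := S.subseq_lemma b f (fun n => le_of_eq (hf1 n)) hconv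
  exact ⟨y, norm_lim_one (fun n => hf1 (φ n)) hconvy, hy⟩

lemma Mset_nonempty (b : X) (hb : S.normQ b = 1) : (S.Mset b).Nonempty := by
  obtain ⟨ω, h1, h2⟩ := S.exists_unit_fixed b hb
  exact ⟨ω, h1, h2⟩

lemma Q_mem_D {b : X} (hb : S.normQ b = 1) {ω : H} (hω : ω ∈ S.Mset b) :
    S.Q ω ∈ S.D b := by
  have hQb : S.Q ω b = 1 := by
    rw [S.Q_apply, hω.2]
    rw [inner_self_eq_norm_sq (𝕜 := 𝕜), hω.1, one_pow]
  constructor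
  · apply le_antisymm
    · have h1 := S.dualNormQ_Q_le ω
      rwa [hω.1, one_pow] at h1
    · have h2 := S.le_dualNormQ (f := S.Q ω) (le_of_eq hb)
      rwa [hQb] at h2
  · exact hQb

lemma isClosed_D (b : X) : IsClosed (S.D b) := by
  have h1 : IsClosed {h : StrongDual ℝ X | S.dualNormQ h = 1} :=
    isClosed_eq S.continuous_dualNormQ continuous_const
  have h2 : IsClosed {h : StrongDual ℝ X | h b = 1} := by
    have hcont : Continuous (fun h : StrongDual ℝ X => h b) :=
      (inclusionInDoubleDual ℝ X b).continuous
    exact isClosed_eq hcont continuous_const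
  exact h1.inter h2

lemma convex_D (b : X) (hb : S.normQ b = 1) : Convex ℝ (S.D b) := by
  rintro h₁ hh₁ h₂ hh₂ s t hs ht hst
  have happ : (s • h₁ + t • h₂) b = 1 := by
    simp only [ContinuousLinearMap.add_apply, ContinuousLinearMap.coe_smul',
      Pi.smul_apply, smul_eq_mul, hh₁.2, hh₂.2]
    linarith
  constructor
  · apply le_antisymm
    · apply S.dualNormQ_le
      intro a ha
      have e1 : (s • h₁ + t • h₂) a = s * h₁ a + t * h₂ a := by
        simp [ContinuousLinearMap.add_apply]
      have l1 : h₁ a ≤ 1 := by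
        have := S.le_dualNormQ (f := h₁) ha; rwa [hh₁.1] at this
      have l2 : h₂ a ≤ 1 := by
        have := S.le_dualNormQ (f := h₂) ha; rwa [hh₂.1] at this
      rw [e1]
      nlinarith
    · have h3 := S.le_dualNormQ (f := s • h₁ + t • h₂) (le_of_eq hb)
      rwa [happ] at h3
  · exact happ

lemma key_ineq {b : X} (hb : S.normQ b = 1) {h : StrongDual ℝ X} (hh : h ∈ S.D b) (a : X) :
    ∃ ω ∈ S.Mset b, h a ≤ S.Q ω a := by
  have hA0 : 0 ≤ S.normQ a := S.normQ_nonneg a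
  have hA1 : (0:ℝ) < S.normQ a + 1 := by linarith
  set t : ℕ → ℝ := fun n => (1/((n:ℝ)+1)) * (1/(S.normQ a + 1)) with htdef
  have htpos : ∀ n, 0 < t n := by intro n; rw [htdef]; positivity
  have htle : ∀ n, t n ≤ 1/(S.normQ a + 1) := by
    intro n
    rw [htdef]
    have h1 : 1/((n:ℝ)+1) ≤ 1 := by
      rw [div_le_one (by positivity)]; simp
    have h2 : (0:ℝ) ≤ 1/(S.normQ a + 1) := by positivity
    nlinarith
  have hta : ∀ n, t n * S.normQ a < 1 := by
    intro n
    have h1 := htle n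
    have h2 : (1/(S.normQ a + 1)) * S.normQ a < 1 := by
      rw [div_mul_eq_mul_div, div_lt_one hA1]; linarith
    have := htpos n
    nlinarith
  set r : ℕ → ℝ := fun n => S.normQ (b + t n • a) with hrdef
  have hub : ∀ n, r n ≤ 1 + t n * S.normQ a := by
    intro n
    have h1 := S.normQ_add_le b (t n • a)
    rw [S.normQ_smul, abs_of_pos (htpos n), hb] at h1
    exact h1
  have hlb : ∀ n, 1 - t n * S.normQ a ≤ r n := by
    intro n
    have h1 := S.normQ_add_le (b + t n • a) (-(t n • a))
    rw [add_neg_cancel_right, S.normQ_neg, S.normQ_smul, abs_of_pos (htpos n), hb] at h1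
    linarith
  have hrpos : ∀ n, 0 < r n := fun n => by have := hta n; have := hlb n; linarith
  set bn : ℕ → X := fun n => (r n)⁻¹ • (b + t n • a) with hbndef
  have hbn : ∀ n, S.normQ (bn n) = 1 := by
    intro n
    rw [hbndef]
    simp only []
    rw [S.normQ_smul, abs_of_pos (inv_pos.2 (hrpos n))]
    exact inv_mul_cancel₀ (ne_of_gt (hrpos n))
  have hfixn : ∀ n, ∃ ω : H, ‖ω‖ = 1 ∧ S.TX (bn n) ω = ω :=
    fun n => S.exists_unit_fixed (bn n) (hbn n)
  choose ω hω1 hω2 using hfixn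
  -- step inequality
  have hstep : ∀ n, h a ≤ S.Q (ω n) a := by
    intro n
    have h1 : h (b + t n • a) ≤ r n := by
      have h2 := S.apply_le_dualNormQ_mul h (b + t n • a)
      rwa [hh.1, one_mul] at h2
    have e2 : S.TX (bn n) (ω n) =
        (((r n)⁻¹ : ℝ) : 𝕜) • (S.TX b (ω n) + ((t n : ℝ) : 𝕜) • S.TX a (ω n)) := by
      rw [hbndef]
      simp only []
      rw [S.TX_smul_apply, S.TX_add_apply, S.TX_smul_apply]
    have e1 : RCLike.re (inner 𝕜 (S.TX (bn n) (ω n)) (ω n) : 𝕜) = 1 := by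
      rw [hω2 n, inner_self_eq_norm_sq (𝕜 := 𝕜), hω1 n, one_pow]
    have e3 : RCLike.re (inner 𝕜 (S.TX (bn n) (ω n)) (ω n) : 𝕜) =
        (r n)⁻¹ * (RCLike.re (inner 𝕜 (S.TX b (ω n)) (ω n) : 𝕜)
          + t n * RCLike.re (inner 𝕜 (S.TX a (ω n)) (ω n) : 𝕜)) := by
      rw [e2, inner_smul_left, RCLike.conj_ofReal, RCLike.re_ofReal_mul, inner_add_left,
        map_add, inner_smul_left, RCLike.conj_ofReal, RCLike.re_ofReal_mul]
    have hTb : RCLike.re (inner 𝕜 (S.TX b (ω n)) (ω n) : 𝕜) ≤ 1 := by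
      have h3 : RCLike.re (inner 𝕜 (S.TX b (ω n)) (ω n) : 𝕜) ≤ ‖S.TX b (ω n)‖ * ‖ω n‖ :=
        re_inner_le_norm _ _
      have h4 : ‖S.TX b (ω n)‖ ≤ ‖S.TX b‖ * ‖ω n‖ := (S.TX b).le_opNorm _
      have h5 : ‖S.TX b‖ = 1 := hb
      rw [hω1 n] at h3 h4
      rw [h5] at h4
      linarith
    have h2 : r n ≤ 1 + t n * S.Q (ω n) a := by
      have h6 : (1:ℝ) = (r n)⁻¹ * (RCLike.re (inner 𝕜 (S.TX b (ω n)) (ω n) : 𝕜)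
          + t n * RCLike.re (inner 𝕜 (S.TX a (ω n)) (ω n) : 𝕜)) := by
        rw [← e3, e1]
      have h7 : r n = RCLike.re (inner 𝕜 (S.TX b (ω n)) (ω n) : 𝕜)
          + t n * RCLike.re (inner 𝕜 (S.TX a (ω n)) (ω n) : 𝕜) := by
        have h8 := hrpos n
        field_simp at h6
        linarith
      rw [S.Q_apply]
      linarith
    have h3 : h (b + t n • a) = 1 + t n * h a := by
      rw [map_add, map_smul, hh.2]
      simp [smul_eq_mul]
    have h4 : t n * h a ≤ t n * S.Q (ω n) a := by linarith
    exact le_of_mul_le_mul_left h4 (htpos n)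
  -- convergence
  have htt : Filter.Tendsto t Filter.atTop (nhds 0) := by
    have h1 := tendsto_one_div_add_atTop_nhds_zero_nat.mul_const (1/(S.normQ a + 1))
    rw [zero_mul] at h1
    exact h1
  have hrt : Filter.Tendsto r Filter.atTop (nhds 1) := by
    have hg : Filter.Tendsto (fun n => 1 - t n * S.normQ a) Filter.atTop (nhds 1) := by
      have h2 := (htt.mul_const (S.normQ a)).const_sub 1
      rw [zero_mul, sub_zero] at h2
      exact h2
    have hgu : Filter.Tendsto (fun n => 1 + t n * S.normQ a) Filter.atTop (nhds 1) := by
      have h2 := (htt.mul_const (S.normQ a)).const_add 1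
      rw [zero_mul, add_zero] at h2
      exact h2
    exact tendsto_of_tendsto_of_tendsto_of_le_of_le hg hgu hlb hub
  have hrinv : Filter.Tendsto (fun n => (r n)⁻¹) Filter.atTop (nhds 1) := by
    have h2 := hrt.inv₀ one_ne_zero
    rw [inv_one] at h2
    exact h2
  have hfix2 : Filter.Tendsto (fun n => ‖S.TX b (ω n) - ω n‖) Filter.atTop (nhds 0) := by
    have bound1 : ∀ n, ‖S.TX b (ω n) - ω n‖ ≤ S.normQ (b - bn n) := by
      intro n
      have e : S.TX b (ω n) - ω n = S.TX (b - bn n) (ω n) := by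
        have h4 := S.TX_add_apply (b - bn n) (bn n) (ω n)
        rw [sub_add_cancel] at h4
        have h5 : S.TX (b - bn n) (ω n) = S.TX b (ω n) - S.TX (bn n) (ω n) :=
          eq_sub_of_add_eq h4.symm
        rw [h5, hω2 n]
      rw [e]
      have h6 := (S.TX (b - bn n)).le_opNorm (ω n)
      rwa [hω1 n, mul_one] at h6
    have bound2 : ∀ n, S.normQ (b - bn n) ≤
        |1 - (r n)⁻¹| + (r n)⁻¹ * (t n * S.normQ a) := by
      intro n
      have e0 : b - bn n = (1 - (r n)⁻¹) • b + (-((r n)⁻¹ * t n)) • a := by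
        rw [hbndef]
        simp only []
        module
      rw [e0]
      have h7 := S.normQ_add_le ((1 - (r n)⁻¹) • b) ((-((r n)⁻¹ * t n)) • a)
      rw [S.normQ_smul, S.normQ_smul, hb, mul_one] at h7
      have h8 : |(-((r n)⁻¹ * t n))| = (r n)⁻¹ * t n := by
        rw [abs_neg, abs_of_pos (mul_pos (inv_pos.2 (hrpos n)) (htpos n))]
      rw [h8] at h7
      calc S.normQ ((1 - (r n)⁻¹) • b + (-((r n)⁻¹ * t n)) • a)
          ≤ |1 - (r n)⁻¹| + (r n)⁻¹ * t n * S.normQ a := h7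
        _ = |1 - (r n)⁻¹| + (r n)⁻¹ * (t n * S.normQ a) := by ring
    have htail : Filter.Tendsto (fun n => |1 - (r n)⁻¹| + (r n)⁻¹ * (t n * S.normQ a))
        Filter.atTop (nhds 0) := by
      have ha1 : Filter.Tendsto (fun n => |1 - (r n)⁻¹|) Filter.atTop (nhds 0) := by
        have h9 := (hrinv.const_sub 1).abs
        rw [sub_self, abs_zero] at h9
        exact h9
      have ha2 : Filter.Tendsto (fun n => (r n)⁻¹ * (t n * S.normQ a)) Filter.atTop (nhds 0) := by
        have h10 := hrinv.mul (htt.mul_const (S.normQ a))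
        rw [zero_mul, mul_zero] at h10
        exact h10
      have h11 := ha1.add ha2
      rw [add_zero] at h11
      exact h11
    exact squeeze_zero (fun n => norm_nonneg _)
      (fun n => le_trans (bound1 n) (bound2 n)) htail
  obtain ⟨y, hy, φ, hφ, hcy⟩ := S.subseq_lemma b ω (fun n => le_of_eq (hω1 n)) hfix2
  have hynorm : ‖y‖ = 1 := norm_lim_one (fun n => hω1 (φ n)) hcy
  have hQy : Filter.Tendsto (fun n => S.Q (ω (φ n)) a) Filter.atTop (nhds (S.Q y a)) := by
    have h11 := ((inclusionInDoubleDual ℝ X a).continuous.tendsto (S.Q y)).comp (S.tendsto_Q hcy)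
    exact h11
  exact ⟨y, ⟨hynorm, hy⟩, ge_of_tendsto' hQy (fun n => hstep (φ n))⟩

/-! ### compactness of the image set -/

def Kset (b : X) : Set (StrongDual ℝ X) := S.Q '' (S.Mset b)

lemma Kset_subset_D {b : X} (hb : S.normQ b = 1) : S.Kset b ⊆ S.D b := by
  rintro k ⟨ω, hω, rfl⟩
  exact S.Q_mem_D hb hω

lemma isCompact_Kset (b : X) : IsCompact (S.Kset b) := by
  have hseq : IsSeqCompact (S.Kset b) := by
    intro k hk
    choose ω hωM hωk using hk
    have hconv0 : Filter.Tendsto (fun n => ‖S.TX b (ω n) - ω n‖) Filter.atTop (nhds 0) := by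
      have he : (fun n => ‖S.TX b (ω n) - ω n‖) = fun _ => (0:ℝ) := by
        funext n
        rw [(hωM n).2, sub_self, norm_zero]
      rw [he]
      exact tendsto_const_nhds
    obtain ⟨y, hy, φ, hφ, hcy⟩ := S.subseq_lemma b ω (fun n => le_of_eq (hωM n).1) hconv0
    have hynorm : ‖y‖ = 1 := norm_lim_one (fun n => (hωM (φ n)).1) hcy
    refine ⟨S.Q y, ⟨y, ⟨hynorm, hy⟩, rfl⟩, φ, hφ, ?_⟩
    have h1 := S.tendsto_Q hcy
    have h2 : (fun n => S.Q ((ω ∘ φ) n)) = k ∘ φ := by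
      funext n
      exact hωk (φ n)
    rw [← h2]
    exact h1
  exact hseq.isCompact

/-! ### the eigenspace is finite dimensional -/

def ESub (b : X) : Submodule 𝕜 H where
  carrier := {x : H | S.TX b x = x}
  add_mem' := by
    intro x y hx hy
    simp only [Set.mem_setOf_eq] at *
    rw [map_add, hx, hy]
  zero_mem' := by simp only [Set.mem_setOf_eq, map_zero]
  smul_mem' := by
    intro c x hx
    simp only [Set.mem_setOf_eq] at *
    rw [map_smul, hx]

lemma finiteDimensional_ESub (b : X) : FiniteDimensional 𝕜 (S.ESub b) := by
  have hBcpt : IsCompact {x : H | S.TX b x = x ∧ ‖x‖ ≤ 1} := by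
    apply IsSeqCompact.isCompact
    intro x hx
    have hconv0 : Filter.Tendsto (fun n => ‖S.TX b (x n) - x n‖) Filter.atTop (nhds 0) := by
      have he : (fun n => ‖S.TX b (x n) - x n‖) = fun _ => (0:ℝ) := by
        funext n
        rw [(hx n).1, sub_self, norm_zero]
      rw [he]
      exact tendsto_const_nhds
    obtain ⟨y, hy, φ, hφ, hcy⟩ := S.subseq_lemma b x (fun n => (hx n).2) hconv0
    refine ⟨y, ⟨hy, ?_⟩, φ, hφ, hcy⟩
    have h1 : Filter.Tendsto (fun n => ‖(x ∘ φ) n‖) Filter.atTop (nhds ‖y‖) := hcy.norm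
    exact le_of_tendsto h1 (Filter.Eventually.of_forall fun n => (hx (φ n)).2)
  have hkey : IsCompact (Metric.closedBall (0 : S.ESub b) 1) := by
    rw [Topology.IsEmbedding.subtypeVal.isCompact_iff]
    have himg : (Subtype.val '' (Metric.closedBall (0 : S.ESub b) 1))
        = {x : H | S.TX b x = x ∧ ‖x‖ ≤ 1} := by
      ext x
      constructor
      · rintro ⟨⟨x, hxE⟩, hxball, rfl⟩
        refine ⟨hxE, ?_⟩
        rw [Metric.mem_closedBall, dist_zero_right] at hxball
        exact hxball
      · rintro ⟨hxE, hxn⟩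
        refine ⟨⟨x, hxE⟩, ?_, rfl⟩
        rw [Metric.mem_closedBall, dist_zero_right]
        exact hxn
    rw [himg]
    exact hBcpt
  exact FiniteDimensional.of_isCompact_closedBall₀ 𝕜 one_pos hkey

/-! ### a finite dimensional subspace containing `Kset` -/

def P2 (ω γ : H) : StrongDual ℝ X :=
  LinearMap.mkContinuous
    { toFun := fun a => RCLike.re (inner 𝕜 (S.TX a ω) γ : 𝕜)
      map_add' := fun a a' => by
        show RCLike.re (inner 𝕜 (S.TX (a + a') ω) γ : 𝕜) = _
        rw [S.TX_add_apply, inner_add_left, map_add]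
      map_smul' := fun r a => by
        show RCLike.re (inner 𝕜 (S.TX (r • a) ω) γ : 𝕜)
            = r * RCLike.re (inner 𝕜 (S.TX a ω) γ : 𝕜)
        rw [S.TX_smul_apply, inner_smul_left, RCLike.conj_ofReal, RCLike.re_ofReal_mul] }
    (S.C * ‖ω‖ * ‖γ‖)
    (fun a => by
      show ‖RCLike.re (inner 𝕜 (S.TX a ω) γ : 𝕜)‖ ≤ S.C * ‖ω‖ * ‖γ‖ * ‖a‖
      have h1 : |RCLike.re (inner 𝕜 (S.TX a ω) γ : 𝕜)| ≤ ‖S.TX a ω‖ * ‖γ‖ := abs_re_inner_le _ _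
      have h2 : ‖S.TX a ω‖ ≤ ‖S.TX a‖ * ‖ω‖ := (S.TX a).le_opNorm ω
      have h3 : ‖S.TX a‖ ≤ S.C * ‖a‖ := S.normQ_le_norm a
      have h4 : ‖RCLike.re (inner 𝕜 (S.TX a ω) γ : 𝕜)‖ = |RCLike.re (inner 𝕜 (S.TX a ω) γ : 𝕜)| :=
        Real.norm_eq_abs _
      rw [h4]
      calc |RCLike.re (inner 𝕜 (S.TX a ω) γ : 𝕜)| ≤ ‖S.TX a ω‖ * ‖γ‖ := h1
        _ ≤ (‖S.TX a‖ * ‖ω‖) * ‖γ‖ := mul_le_mul_of_nonneg_right h2 (norm_nonneg γ)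
        _ ≤ ((S.C * ‖a‖) * ‖ω‖) * ‖γ‖ := by
            have := mul_le_mul_of_nonneg_right h3 (norm_nonneg ω)
            exact mul_le_mul_of_nonneg_right this (norm_nonneg γ)
        _ = S.C * ‖ω‖ * ‖γ‖ * ‖a‖ := by ring)

def P2' (ω γ : H) : StrongDual ℝ X :=
  LinearMap.mkContinuous
    { toFun := fun a => RCLike.im (inner 𝕜 (S.TX a ω) γ : 𝕜)
      map_add' := fun a a' => by
        show RCLike.im (inner 𝕜 (S.TX (a + a') ω) γ : 𝕜) = _
        rw [S.TX_add_apply, inner_add_left, map_add]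
      map_smul' := fun r a => by
        show RCLike.im (inner 𝕜 (S.TX (r • a) ω) γ : 𝕜)
            = r * RCLike.im (inner 𝕜 (S.TX a ω) γ : 𝕜)
        rw [S.TX_smul_apply, inner_smul_left, RCLike.conj_ofReal, RCLike.im_ofReal_mul] }
    (S.C * ‖ω‖ * ‖γ‖)
    (fun a => by
      show ‖RCLike.im (inner 𝕜 (S.TX a ω) γ : 𝕜)‖ ≤ S.C * ‖ω‖ * ‖γ‖ * ‖a‖
      have h1 : |RCLike.im (inner 𝕜 (S.TX a ω) γ : 𝕜)| ≤ ‖(inner 𝕜 (S.TX a ω) γ : 𝕜)‖ :=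
        RCLike.abs_im_le_norm _
      have h1' : ‖(inner 𝕜 (S.TX a ω) γ : 𝕜)‖ ≤ ‖S.TX a ω‖ * ‖γ‖ := norm_inner_le_norm _ _
      have h2 : ‖S.TX a ω‖ ≤ ‖S.TX a‖ * ‖ω‖ := (S.TX a).le_opNorm ω
      have h3 : ‖S.TX a‖ ≤ S.C * ‖a‖ := S.normQ_le_norm a
      have h4 : ‖RCLike.im (inner 𝕜 (S.TX a ω) γ : 𝕜)‖ = |RCLike.im (inner 𝕜 (S.TX a ω) γ : 𝕜)| :=
        Real.norm_eq_abs _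
      rw [h4]
      calc |RCLike.im (inner 𝕜 (S.TX a ω) γ : 𝕜)| ≤ ‖S.TX a ω‖ * ‖γ‖ := h1.trans h1'
        _ ≤ (‖S.TX a‖ * ‖ω‖) * ‖γ‖ := mul_le_mul_of_nonneg_right h2 (norm_nonneg γ)
        _ ≤ ((S.C * ‖a‖) * ‖ω‖) * ‖γ‖ := by
            have := mul_le_mul_of_nonneg_right h3 (norm_nonneg ω)
            exact mul_le_mul_of_nonneg_right this (norm_nonneg γ)
        _ = S.C * ‖ω‖ * ‖γ‖ * ‖a‖ := by ring)

lemma P2_apply (ω γ : H) (a : X) :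
    S.P2 ω γ a = RCLike.re (inner 𝕜 (S.TX a ω) γ : 𝕜) := rfl

lemma P2'_apply (ω γ : H) (a : X) :
    S.P2' ω γ a = RCLike.im (inner 𝕜 (S.TX a ω) γ : 𝕜) := rfl

def eb (b : X) : Fin (Module.finrank 𝕜 (S.ESub b)) → H :=
  haveI := S.finiteDimensional_ESub b
  fun i => ((Module.finBasis 𝕜 (S.ESub b)) i : H)

def Lsub (b : X) : Submodule ℝ (StrongDual ℝ X) :=
  Submodule.span ℝ
    ((Set.range fun p : Fin (Module.finrank 𝕜 (S.ESub b)) ×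
        Fin (Module.finrank 𝕜 (S.ESub b)) => S.P2 (S.eb b p.1) (S.eb b p.2)) ∪
      (Set.range fun p : Fin (Module.finrank 𝕜 (S.ESub b)) ×
        Fin (Module.finrank 𝕜 (S.ESub b)) => S.P2' (S.eb b p.1) (S.eb b p.2)))

lemma finiteDimensional_Lsub (b : X) : FiniteDimensional ℝ (S.Lsub b) :=
  FiniteDimensional.span_of_finite ℝ ((Set.finite_range _).union (Set.finite_range _))

lemma Q_rep (n : ℕ) (cc : Fin n → 𝕜) (u : Fin n → H) :
    S.Q (∑ i, cc i • u i) = ∑ i, ∑ j,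
      (RCLike.re ((starRingEnd 𝕜) (cc i) * cc j) • S.P2 (u i) (u j)
        - RCLike.im ((starRingEnd 𝕜) (cc i) * cc j) • S.P2' (u i) (u j)) := by
  ext a
  rw [S.Q_apply]
  have e1 : (S.TX a) (∑ i, cc i • u i) = ∑ i, cc i • (S.TX a) (u i) := by
    simp
  rw [e1, sum_inner]
  have e2 : ∀ i, (inner 𝕜 (cc i • (S.TX a) (u i)) (∑ j, cc j • u j) : 𝕜)
      = ∑ j, ((starRingEnd 𝕜) (cc i) * cc j) * (inner 𝕜 ((S.TX a) (u i)) (u j) : 𝕜) := by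
    intro i
    rw [inner_smul_left, inner_sum]
    rw [Finset.mul_sum]
    congr 1
    funext j
    rw [inner_smul_right]
    ring
  have e3 : RCLike.re (∑ i, (inner 𝕜 (cc i • (S.TX a) (u i)) (∑ j, cc j • u j) : 𝕜))
      = ∑ i, ∑ j, RCLike.re (((starRingEnd 𝕜) (cc i) * cc j) * (inner 𝕜 ((S.TX a) (u i)) (u j) : 𝕜)) := by
    rw [map_sum]
    congr 1
    funext i
    rw [e2 i, map_sum]
  rw [e3]
  have e4 : (∑ i, ∑ j,
      (RCLike.re ((starRingEnd 𝕜) (cc i) * cc j) • S.P2 (u i) (u j)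
        - RCLike.im ((starRingEnd 𝕜) (cc i) * cc j) • S.P2' (u i) (u j))) a
      = ∑ i, ∑ j, (RCLike.re ((starRingEnd 𝕜) (cc i) * cc j) * S.P2 (u i) (u j) a
        - RCLike.im ((starRingEnd 𝕜) (cc i) * cc j) * S.P2' (u i) (u j) a) := by
    simp [ContinuousLinearMap.sum_apply, ContinuousLinearMap.sub_apply,
      ContinuousLinearMap.smul_apply, smul_eq_mul]
  rw [e4]
  apply Finset.sum_congr rfl
  intro i _
  apply Finset.sum_congr rfl
  intro j _
  rw [S.P2_apply, S.P2'_apply, RCLike.mul_re]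

lemma Q_mem_Lsub {b : X} {ω : H} (hω : ω ∈ S.Mset b) : S.Q ω ∈ S.Lsub b := by
  haveI := S.finiteDimensional_ESub b
  have hωE : ω ∈ S.ESub b := hω.2
  set B := Module.finBasis 𝕜 (S.ESub b) with hB
  set x : S.ESub b := ⟨ω, hωE⟩ with hx
  have hrepr : ω = ∑ i, (B.repr x i) • S.eb b i := by
    have h1 := B.sum_repr x
    have h3 : ((∑ i, (B.repr x) i • B i : S.ESub b) : H) = ∑ i, (B.repr x) i • (B i : H) := by
      simp only [Submodule.coe_sum, Submodule.coe_smul]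
    calc ω = ((x : S.ESub b) : H) := rfl
      _ = ((∑ i, (B.repr x) i • B i : S.ESub b) : H) := by rw [h1]
      _ = ∑ i, (B.repr x) i • (B i : H) := h3
      _ = ∑ i, (B.repr x) i • S.eb b i := rfl
  rw [hrepr, S.Q_rep]
  apply Submodule.sum_mem
  intro i _
  apply Submodule.sum_mem
  intro j _
  apply Submodule.sub_mem
  · apply Submodule.smul_mem
    apply Submodule.subset_span
    exact Set.mem_union_left _ ⟨(i, j), rfl⟩
  · apply Submodule.smul_mem
    apply Submodule.subset_span
    exact Set.mem_union_right _ ⟨(i, j), rfl⟩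

lemma exists_point_eval (L' : Submodule ℝ (StrongDual ℝ X)) [FiniteDimensional ℝ L']
    (φ : Module.Dual ℝ L') : ∃ a : X, ∀ g : L', (g : StrongDual ℝ X) a = φ g := by
  set ev : X →ₗ[ℝ] Module.Dual ℝ L' :=
    { toFun := fun a =>
        { toFun := fun g => (g : StrongDual ℝ X) a
          map_add' := fun g g' => by simp
          map_smul' := fun r g => by simp }
      map_add' := fun a a' => by
        ext g
        simp
      map_smul' := fun r a => by
        ext g
        simp } with hev
  have hco : (LinearMap.range ev).dualCoannihilator = ⊥ := by
    rw [Submodule.eq_bot_iff]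
    intro g hg
    rw [Submodule.mem_dualCoannihilator] at hg
    have hall : ∀ a : X, (g : StrongDual ℝ X) a = 0 := by
      intro a
      exact hg (ev a) (LinearMap.mem_range_self _ _)
    exact Subtype.ext (ContinuousLinearMap.ext hall)
  have htop : LinearMap.range ev = ⊤ := by
    haveI : Module.Free ℝ L' := Module.Free.of_divisionRing ℝ L'
    haveI : Module.Projective ℝ L' := Module.Projective.of_free
    haveI : FiniteDimensional ℝ (Module.Dual ℝ L') := Module.dual_finite
    haveI : FiniteDimensional ℝ (LinearMap.range ev) := FiniteDimensional.finiteDimensional_submodule _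
    have h1 := Subspace.dualCoannihilator_dualAnnihilator_eq (K := ℝ) (V := L') (W := LinearMap.range ev)
    rw [hco, Submodule.dualAnnihilator_bot] at h1
    exact h1.symm
  have hφ : φ ∈ LinearMap.range ev := by rw [htop]; trivial
  obtain ⟨a, ha⟩ := hφ
  exact ⟨a, fun g => by rw [← ha]; rfl⟩

lemma D_subset_closure {b : X} (hb : S.normQ b = 1) :
    S.D b ⊆ closure (convexHull ℝ (S.Kset b)) := by
  intro h hh
  by_contra hnot
  obtain ⟨f, u, hfu, huf⟩ := geometric_hahn_banach_closed_point
    ((convex_convexHull ℝ (S.Kset b)).closure) isClosed_closure hnot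
  haveI := S.finiteDimensional_Lsub b
  set L' : Submodule ℝ (StrongDual ℝ X) := S.Lsub b ⊔ Submodule.span ℝ {h} with hL'
  haveI : FiniteDimensional ℝ (Submodule.span ℝ ({h} : Set (StrongDual ℝ X))) :=
    FiniteDimensional.span_of_finite ℝ (Set.finite_singleton h)
  haveI : FiniteDimensional ℝ L' := Submodule.finiteDimensional_sup _ _
  obtain ⟨a, ha⟩ := exists_point_eval L' (f.toLinearMap.domRestrict L')
  have hmemh : h ∈ L' := Submodule.mem_sup_right (Submodule.mem_span_singleton_self h)
  obtain ⟨ω₀, hω₀, hle⟩ := S.key_ineq hb hh a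
  have hQmem : S.Q ω₀ ∈ L' := Submodule.mem_sup_left (S.Q_mem_Lsub hω₀)
  have e1 : S.Q ω₀ a = f (S.Q ω₀) := ha ⟨S.Q ω₀, hQmem⟩
  have e2 : h a = f h := ha ⟨h, hmemh⟩
  have h3 : f (S.Q ω₀) < u :=
    hfu _ (subset_closure (subset_convexHull ℝ _ ⟨ω₀, hω₀, rfl⟩))
  linarith

lemma D_eq {b : X} (hb : S.normQ b = 1) :
    S.D b = closure (convexHull ℝ (S.Kset b)) := by
  apply subset_antisymm (S.D_subset_closure hb)
  apply closure_minimal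
  · exact convexHull_min (S.Kset_subset_D hb) (S.convex_D b hb)
  · exact S.isClosed_D b

lemma isCompact_D {b : X} (hb : S.normQ b = 1) : IsCompact (S.D b) := by
  rw [S.D_eq hb]
  apply TotallyBounded.isCompact_of_isClosed
  · exact (totallyBounded_convexHull.mpr (S.isCompact_Kset b).totallyBounded).closure
  · exact isClosed_closure

lemma nonempty_D {b : X} (hb : S.normQ b = 1) : (S.D b).Nonempty := by
  obtain ⟨ω, hω⟩ := S.Mset_nonempty b hb
  exact ⟨S.Q ω, S.Q_mem_D hb hω⟩

lemma usc_D {b : X} (hb : S.normQ b = 1) {V : Set (StrongDual ℝ X)} (hV : IsOpen V)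
    (hDV : S.D b ⊆ V) :
    ∃ δ > 0, ∀ b' : X, S.normQ b' = 1 → S.normQ (b' - b) < δ → S.D b' ⊆ V := by
  obtain ⟨ε, hε, hsub⟩ := (S.isCompact_D hb).exists_cthickening_subset_open hV hDV
  have claim : ∃ δ > 0, ∀ b' : X, S.normQ b' = 1 → S.normQ (b' - b) < δ →
      S.Kset b' ⊆ Metric.thickening ε (S.D b) := by
    by_contra hcon
    push_neg at hcon
    have hseq : ∀ n : ℕ, ∃ b' : X, S.normQ b' = 1 ∧ S.normQ (b' - b) < 1/((n:ℝ)+1) ∧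
        ∃ ω : H, ω ∈ S.Mset b' ∧ S.Q ω ∉ Metric.thickening ε (S.D b) := by
      intro n
      obtain ⟨b', h1, h2, h3⟩ := hcon (1/((n:ℝ)+1)) (by positivity)
      obtain ⟨k, hk1, hk2⟩ := Set.not_subset.mp h3
      obtain ⟨ω, hωM, rfl⟩ := hk1
      exact ⟨b', h1, h2, ω, hωM, hk2⟩
    choose bn h1 h2 ω hωM hωnot using hseq
    have hfix : Filter.Tendsto (fun n => ‖S.TX b (ω n) - ω n‖) Filter.atTop (nhds 0) := by
      have hbound : ∀ n, ‖S.TX b (ω n) - ω n‖ ≤ 1/((n:ℝ)+1) := by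
        intro n
        have e : S.TX b (ω n) - ω n = S.TX (b - bn n) (ω n) := by
          have h4 := S.TX_add_apply (b - bn n) (bn n) (ω n)
          rw [sub_add_cancel] at h4
          have h5 : S.TX (b - bn n) (ω n) = S.TX b (ω n) - S.TX (bn n) (ω n) :=
            eq_sub_of_add_eq h4.symm
          rw [h5, (hωM n).2]
        rw [e]
        have h6 := (S.TX (b - bn n)).le_opNorm (ω n)
        rw [(hωM n).1, mul_one] at h6
        have h7 : S.normQ (b - bn n) = S.normQ (bn n - b) := by
          rw [← S.normQ_neg (b - bn n), neg_sub]
        have h8 := h2 n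
        calc ‖S.TX (b - bn n) (ω n)‖ ≤ S.normQ (b - bn n) := h6
          _ = S.normQ (bn n - b) := h7
          _ ≤ 1/((n:ℝ)+1) := le_of_lt h8
      exact squeeze_zero (fun n => norm_nonneg _) hbound tendsto_one_div_add_atTop_nhds_zero_nat
    obtain ⟨y, hy, φ, hφ, hcy⟩ := S.subseq_lemma b ω (fun n => le_of_eq (hωM n).1) hfix
    have hynorm : ‖y‖ = 1 := norm_lim_one (fun n => (hωM (φ n)).1) hcy
    have hyD : S.Q y ∈ S.D b := S.Q_mem_D hb ⟨hynorm, hy⟩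
    have hQt : Filter.Tendsto (fun n => S.Q (ω (φ n))) Filter.atTop (nhds (S.Q y)) :=
      S.tendsto_Q hcy
    have hev : ∀ᶠ n in Filter.atTop, dist (S.Q (ω (φ n))) (S.Q y) < ε :=
      (Metric.tendsto_nhds.mp hQt) ε hε
    obtain ⟨n, hn⟩ := hev.exists
    exact hωnot (φ n) (Metric.mem_thickening_iff.mpr ⟨S.Q y, hyD, hn⟩)
  obtain ⟨δ, hδ, hclaim⟩ := claim
  refine ⟨δ, hδ, fun b' hb' hdist => ?_⟩
  rw [S.D_eq hb']
  have hconv : convexHull ℝ (S.Kset b') ⊆ Metric.thickening ε (S.D b) :=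
    convexHull_min (hclaim b' hb' hdist) ((S.convex_D b hb).thickening ε)
  have hclos : closure (convexHull ℝ (S.Kset b')) ⊆ Metric.cthickening ε (S.D b) :=
    closure_minimal (hconv.trans (Metric.thickening_subset_cthickening ε _))
      Metric.isClosed_cthickening
  exact hclos.trans hsub

end CLMS

/-- under (Sym), the duality mapping `D` is a cusco map on the
unit sphere of `(X, ‖·‖_{X_Q})`: nonempty convex compact values and
norm-to-norm upper semicontinuity. -/
theorem stmt_19 {𝕜 X H : Type*} [RCLike 𝕜]
    [NormedAddCommGroup X] [NormedSpace ℝ X] [CompleteSpace X]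
    [TopologicalSpace.SeparableSpace (StrongDual ℝ X)]
    [NormedAddCommGroup H] [InnerProductSpace 𝕜 H] [CompleteSpace H]
    (S : CLMS 𝕜 X H) (hSym : S.Sym) :
    ∀ b : X, S.normQ b = 1 →
      (S.D b).Nonempty ∧ Convex ℝ (S.D b) ∧ IsCompact (S.D b) ∧
      ∀ V : Set (StrongDual ℝ X), IsOpen V → S.D b ⊆ V →
        ∃ δ > 0, ∀ b' : X, S.normQ b' = 1 → S.normQ (b' - b) < δ →
          S.D b' ⊆ V := by
  intro b hb
  exact ⟨S.nonempty_D hb, S.convex_D b hb, S.isCompact_D hb,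
    fun V hV hDV => S.usc_D hb hV hDV⟩
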